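/- (Proposition 3.3: observability of the initial datum of l on small ages.) Let A, T > 0, 0 ≤ b₁ < b₂ ≤ A, b ∈ (0,A], set ν = min{b, b₂}, and let b₁ < a₀ < ν and T > b₁. Let μ_f : [0,A) → [0,∞) be measurable and locally integrable, let ψ : ℝ → ℝ be measurable, and let l be a measurable function on (0,A)×[0,T) such that l(a,t) = exp(∫₀^a μ_f(r) dr)·ψ(t−a) for a.e. (a,t) ∈ (0,ν)×(0,T), with l(a,0) = exp(∫₀^a μ_f(r) dr)·ψ(−a) for a ∈ (0,ν). Then there exists a constant C > 0 depending only on b₁, b₂, b, a₀ and T (independent of μ_f and ψ) such that ∫₀^{a₀} l(a,0)² da ≤ C·∫₀^T ∫_{b₁}^{b₂} l(a,t)² da dt. -/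

import Mathlib

open MeasureTheory Set

/-- Proposition 3.3: for `0 ≤ b₁ < b₂`, `b ∈ (0,A]`, `ν = min{b,b₂}`, `b₁ < a₀ < ν`
and `T > b₁`, there is a constant `C > 0` depending only on `b₁, b₂, b, a₀, T` such
that for every `A` (with `b₂ ≤ A`, `b ≤ A`), every measurable locally integrable
`μ_f : [0,A) → [0,∞)`, every measurable `ψ : ℝ → ℝ` and every measurable `l` on
`(0,A)×[0,T)` equal a.e. on `(0,ν)×(0,T)` to `exp(∫₀^a μ_f)·ψ(t−a)`, and equal to
`exp(∫₀^a μ_f)·ψ(−a)` at `t = 0` for `a ∈ (0,ν)`, one has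
`∫₀^{a₀} l(a,0)² da ≤ C·∫₀^T ∫_{b₁}^{b₂} l(a,t)² da dt`. -/
theorem stmt6 (b₁ b₂ b a₀ T : ℝ) (hT : 0 < T) (hb₁ : 0 ≤ b₁) (hb : b₁ < b₂)
    (hbpos : 0 < b) (ha₀ : b₁ < a₀) (ha₀ν : a₀ < min b b₂) (hTb₁ : b₁ < T) :
    ∃ C > 0, ∀ (A : ℝ), 0 < A → b₂ ≤ A → b ≤ A →
      ∀ (μf ψ : ℝ → ℝ) (l : ℝ → ℝ → ℝ),
        Measurable μf → (∀ a ∈ Ico 0 A, 0 ≤ μf a) →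
        (∀ a ∈ Ico 0 A, IntegrableOn μf (Icc 0 a)) → Measurable ψ →
        Measurable (fun p : ℝ × ℝ => l p.1 p.2) →
        (∀ᵐ p ∂(volume.restrict (Ioo 0 (min b b₂) ×ˢ Ioo 0 T)),
          l p.1 p.2 = Real.exp (∫ r in (0:ℝ)..p.1, μf r) * ψ (p.2 - p.1)) →
        (∀ a ∈ Ioo 0 (min b b₂),
          l a 0 = Real.exp (∫ r in (0:ℝ)..a, μf r) * ψ (-a)) →
        (∫⁻ a in Ioo 0 a₀, ENNReal.ofReal ((l a 0) ^ 2)) ≤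
          ENNReal.ofReal C *
            ∫⁻ t in Ioo 0 T, ∫⁻ a in Ioo b₁ b₂, ENNReal.ofReal ((l a t) ^ 2) := by
  set ν := min b b₂ with hνdef
  have hνb₂ : ν ≤ b₂ := min_le_right _ _
  have ha₀pos : 0 < a₀ := lt_of_le_of_lt hb₁ ha₀
  have hνpos : 0 < ν := lt_trans ha₀pos ha₀ν
  set δ := min (ν - a₀) (T - b₁) with hδdef
  have hδpos : 0 < δ := lt_min (by linarith) (by linarith)
  refine ⟨1/δ, by positivity, ?_⟩
  intro A hA hb₂A hbA μf ψ l hμf hμf0 hμfint hψ hl hae hinit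
  have hνA : ν ≤ A := le_trans hνb₂ hb₂A
  -- the truncated mortality rate and its (ENNReal-valued) primitive
  set μg : ℝ → ℝ := (Ico (0:ℝ) A).indicator μf with hμgdef
  have hμg : Measurable μg := hμf.indicator measurableSet_Ico
  have hμg0 : ∀ r, 0 ≤ μg r := by
    intro r
    by_cases h : r ∈ Ico (0:ℝ) A
    · rw [hμgdef, indicator_of_mem h]; exact hμf0 r h
    · rw [hμgdef, indicator_of_notMem h]
  set P : ℝ → ENNReal := fun x => ∫⁻ r in Ioc (0:ℝ) x, ENNReal.ofReal (μg r) with hPdef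
  have hPmono : Monotone P := by
    intro x y hxy
    exact lintegral_mono_set (Ioc_subset_Ioc_right hxy)
  have hPmeas : Measurable P := hPmono.measurable
  set E' : ℝ → ℝ := fun a => Real.exp (P a).toReal with hE'def
  have hE' : Measurable E' :=
    Real.measurable_exp.comp (ENNReal.measurable_toReal.comp hPmeas)
  have hE'pos : ∀ a, 0 < E' a := fun a => Real.exp_pos _
  -- P agrees with the lintegral of μf and is finite on [0, A)
  have hPeq : ∀ a, 0 ≤ a → a < A →
      P a = ∫⁻ r in Ioc (0:ℝ) a, ENNReal.ofReal (μf r) := by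
    intro a ha0 haA
    refine setLIntegral_congr_fun measurableSet_Ioc ?_
    intro r hr
    have : r ∈ Ico (0:ℝ) A := ⟨hr.1.le, lt_of_le_of_lt hr.2 haA⟩
    beta_reduce
    rw [hμgdef, indicator_of_mem this]
  have hPfin : ∀ a, 0 ≤ a → a < A → P a < ⊤ := by
    intro a ha0 haA
    rw [hPeq a ha0 haA]
    exact ((hμfint a ⟨ha0, haA⟩).mono_set Ioc_subset_Icc_self).lintegral_lt_top
  -- E' equals the exponential of the primitive on [0, A)
  have hEeq : ∀ a, 0 ≤ a → a < A →
      Real.exp (∫ r in (0:ℝ)..a, μf r) = E' a := by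
    intro a ha0 haA
    have h1 : (∫ r in (0:ℝ)..a, μf r) = ∫ r in Ioc (0:ℝ) a, μf r :=
      intervalIntegral.integral_of_le ha0
    have h2 : (∫ r in Ioc (0:ℝ) a, μf r) = ∫ r in Ioc (0:ℝ) a, μg r := by
      refine (setIntegral_congr_fun measurableSet_Ioc ?_)
      intro r hr
      have : r ∈ Ico (0:ℝ) A := ⟨hr.1.le, lt_of_le_of_lt hr.2 haA⟩
      rw [hμgdef, indicator_of_mem this]
    have h3 : (∫ r in Ioc (0:ℝ) a, μg r) = (P a).toReal := by
      rw [hPdef]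
      exact integral_eq_lintegral_of_nonneg_ae
        (Filter.Eventually.of_forall hμg0) hμg.aestronglyMeasurable
    rw [hE'def, h1, h2, h3]
  -- monotonicity of E' on [0, A)
  have hE'mono : ∀ x y, 0 ≤ x → x ≤ y → y < A → E' x ≤ E' y := by
    intro x y hx hxy hyA
    rw [hE'def]
    apply Real.exp_le_exp.2
    exact ENNReal.toReal_mono (hPfin y (hx.trans hxy) hyA).ne (hPmono hxy)
  -- rewrite the left-hand side using the initial condition
  have hLHS : (∫⁻ a in Ioo 0 a₀, ENNReal.ofReal ((l a 0) ^ 2)) =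
      ∫⁻ a in Ioo 0 a₀, ENNReal.ofReal ((E' a * ψ (-a)) ^ 2) := by
    refine setLIntegral_congr_fun measurableSet_Ioo ?_
    intro a ha
    have ha' : a ∈ Ioo 0 ν := ⟨ha.1, lt_trans ha.2 ha₀ν⟩
    beta_reduce
    rw [hinit a ha', hEeq a ha.1.le (lt_of_lt_of_le (lt_trans ha.2 ha₀ν) hνA)]
  -- the reflected integrand
  set G : ℝ → ENNReal := fun u => ENNReal.ofReal ((E' (-u) * ψ u) ^ 2) with hGdef
  have hG : Measurable G :=
    (((hE'.comp measurable_neg).mul hψ).pow_const 2).ennreal_ofReal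
  -- reflection identity
  have hrefl : (∫⁻ u in Ioo (-a₀) 0, G u) =
      ∫⁻ a in Ioo 0 a₀, ENNReal.ofReal ((E' a * ψ (-a)) ^ 2) := by
    have hmap : Measure.map Neg.neg (volume : Measure ℝ) = volume :=
      (Measure.measurePreserving_neg _).map_eq
    have hpre : (Neg.neg : ℝ → ℝ) ⁻¹' (Ioo (-a₀) 0) = Ioo 0 a₀ := by
      ext x
      simp only [mem_preimage, mem_Ioo]
      constructor
      · rintro ⟨h1, h2⟩; constructor <;> linarith
      · rintro ⟨h1, h2⟩; constructor <;> linarith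
    calc (∫⁻ u in Ioo (-a₀) 0, G u)
        = ∫⁻ u in Ioo (-a₀) 0, G u ∂(Measure.map Neg.neg volume) := by rw [hmap]
      _ = ∫⁻ x in (Neg.neg : ℝ → ℝ) ⁻¹' (Ioo (-a₀) 0), G (-x) := by
          exact setLIntegral_map measurableSet_Ioo hG measurable_neg
      _ = ∫⁻ a in Ioo 0 a₀, ENNReal.ofReal ((E' a * ψ (-a)) ^ 2) := by
          rw [hpre]
          refine setLIntegral_congr_fun measurableSet_Ioo
            ?_
          intro a _
          rw [hGdef]
          simp only [neg_neg]
  -- the main comparison set and functions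
  set Fn : ℝ × ℝ → ENNReal := fun p => ENNReal.ofReal ((E' p.1 * ψ p.2) ^ 2)
    with hFndef
  have hFn : Measurable Fn :=
    (((hE'.comp measurable_fst).mul (hψ.comp measurable_snd)).pow_const 2).ennreal_ofReal
  set S : Set (ℝ × ℝ) :=
    (fun p : ℝ × ℝ => p.1) ⁻¹' (Ioo b₁ ν) ∩ (fun p : ℝ × ℝ => p.1 + p.2) ⁻¹' (Ioo 0 T)
    with hSdef
  have hS : MeasurableSet S :=
    (measurable_fst measurableSet_Ioo).inter
      ((measurable_fst.add measurable_snd) measurableSet_Ioo)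
  set K : ℝ × ℝ → ENNReal := S.indicator Fn with hKdef
  have hK : Measurable K := hFn.indicator hS
  -- Step (i): fiberwise lower bound
  have hstepi : ∀ u ∈ Ioo (-a₀) 0, ENNReal.ofReal δ * G u ≤ ∫⁻ a, K (a, u) := by
    intro u hu
    obtain ⟨hu1, hu2⟩ := hu
    set I : Set ℝ := Ioo (max b₁ (-u)) (min ν (T - u)) with hIdef
    have hlen : δ ≤ min ν (T - u) - max b₁ (-u) := by
      have h1 : δ ≤ ν - a₀ := min_le_left _ _
      have h2 : δ ≤ T - b₁ := min_le_right _ _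
      rcases max_cases b₁ (-u) with ⟨he, he'⟩ | ⟨he, he'⟩ <;>
        rcases min_cases ν (T - u) with ⟨he2, he2'⟩ | ⟨he2, he2'⟩ <;>
        rw [he, he2] <;> linarith
    have hmono : ∀ a, I.indicator (fun _ => G u) a ≤ K (a, u) := by
      intro a
      by_cases ha : a ∈ I
      · rw [indicator_of_mem ha]
        obtain ⟨hal, har⟩ := ha
        have hab₁ : b₁ < a := lt_of_le_of_lt (le_max_left _ _) hal
        have hau : -u < a := lt_of_le_of_lt (le_max_right _ _) hal
        have haν : a < ν := lt_of_lt_of_le har (min_le_left _ _)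
        have haT : a < T - u := lt_of_lt_of_le har (min_le_right _ _)
        have hmem : (a, u) ∈ S := by
          refine ⟨⟨hab₁, haν⟩, ?_⟩
          simp only [mem_preimage, mem_Ioo]
          constructor <;> linarith
        rw [hKdef, indicator_of_mem hmem, hFndef, hGdef]
        apply ENNReal.ofReal_le_ofReal
        have hEE : E' (-u) ≤ E' a :=
          hE'mono (-u) a (by linarith) hau.le (lt_of_lt_of_le haν hνA)
        calc (E' (-u) * ψ u) ^ 2 = E' (-u) ^ 2 * ψ u ^ 2 := by ring
          _ ≤ E' a ^ 2 * ψ u ^ 2 := by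
              apply mul_le_mul_of_nonneg_right _ (sq_nonneg _)
              exact pow_le_pow_left₀ (hE'pos _).le hEE 2
          _ = (E' a * ψ u) ^ 2 := by ring
      · rw [indicator_of_notMem ha]
        exact zero_le
    calc ENNReal.ofReal δ * G u
        ≤ ENNReal.ofReal (min ν (T - u) - max b₁ (-u)) * G u :=
          mul_le_mul_left (ENNReal.ofReal_le_ofReal hlen) _
      _ = G u * volume I := by
          rw [hIdef, Real.volume_Ioo, mul_comm]
      _ = ∫⁻ a, I.indicator (fun _ => G u) a := by
          rw [lintegral_indicator measurableSet_Ioo, setLIntegral_const]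
      _ ≤ ∫⁻ a, K (a, u) := lintegral_mono hmono
  -- translate K in the second variable
  set Q : ℝ × ℝ → ENNReal :=
    (Ioo b₁ ν ×ˢ Ioo 0 T).indicator (fun p => ENNReal.ofReal ((E' p.1 * ψ (p.2 - p.1)) ^ 2))
    with hQdef
  have hQmeas : Measurable Q := by
    refine Measurable.indicator ?_ (measurableSet_Ioo.prod measurableSet_Ioo)
    exact (((hE'.comp measurable_fst).mul
      (hψ.comp (measurable_snd.sub measurable_fst))).pow_const 2).ennreal_ofReal
  have hKQ : ∀ a t : ℝ, K (a, t - a) = Q (a, t) := by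
    intro a t
    have hiff : (a, t - a) ∈ S ↔ (a, t) ∈ Ioo b₁ ν ×ˢ Ioo 0 T := by
      simp only [hSdef, mem_inter_iff, mem_preimage, mem_Ioo, mem_prod]
      constructor
      · rintro ⟨⟨h1, h2⟩, h3, h4⟩
        exact ⟨⟨h1, h2⟩, by linarith, by linarith⟩
      · rintro ⟨⟨h1, h2⟩, h3, h4⟩
        exact ⟨⟨h1, h2⟩, by linarith, by linarith⟩
    by_cases hm : (a, t) ∈ Ioo b₁ ν ×ˢ Ioo 0 T
    · rw [hKdef, hQdef, indicator_of_mem (hiff.2 hm), indicator_of_mem hm]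
    · rw [hKdef, hQdef, indicator_of_notMem (fun hc => hm (hiff.1 hc)),
        indicator_of_notMem hm]
  -- Tonelli manipulations
  have htonelli : (∫⁻ u, ∫⁻ a, K (a, u)) = ∫⁻ a, ∫⁻ t, Q (a, t) := by
    calc (∫⁻ u, ∫⁻ a, K (a, u))
        = ∫⁻ p, K p ∂((volume : Measure ℝ).prod volume) :=
          (lintegral_prod_symm K hK.aemeasurable).symm
      _ = ∫⁻ a, ∫⁻ u, K (a, u) := lintegral_prod K hK.aemeasurable
      _ = ∫⁻ a, ∫⁻ t, Q (a, t) := by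
          refine lintegral_congr fun a => ?_
          calc (∫⁻ u, K (a, u)) = ∫⁻ t, K (a, t + -a) :=
              (lintegral_add_right_eq_self (fun u => K (a, u)) (-a)).symm
            _ = ∫⁻ t, Q (a, t) := by
                refine lintegral_congr fun t => ?_
                rw [← sub_eq_add_neg, hKQ]
  -- identify with the integral of l on the strip
  have hstrip : (∫⁻ a, ∫⁻ t, Q (a, t)) =
      ∫⁻ p in Ioo b₁ ν ×ˢ Ioo 0 T, ENNReal.ofReal ((l p.1 p.2) ^ 2) := by
    have h1 : (∫⁻ a, ∫⁻ t, Q (a, t)) = ∫⁻ p, Q p ∂((volume : Measure ℝ).prod volume) :=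
      (lintegral_prod Q hQmeas.aemeasurable).symm
    have h2 : (∫⁻ p, Q p ∂((volume : Measure ℝ).prod volume)) =
        ∫⁻ p in Ioo b₁ ν ×ˢ Ioo 0 T,
          ENNReal.ofReal ((E' p.1 * ψ (p.2 - p.1)) ^ 2)
          ∂((volume : Measure ℝ).prod volume) := by
      rw [hQdef, lintegral_indicator (measurableSet_Ioo.prod measurableSet_Ioo)]
    have hvol : ((volume : Measure ℝ).prod volume) = (volume : Measure (ℝ × ℝ)) :=
      (Measure.volume_eq_prod ℝ ℝ).symm
    have hsubset : (Ioo b₁ ν ×ˢ Ioo 0 T : Set (ℝ × ℝ)) ⊆ Ioo 0 ν ×ˢ Ioo 0 T :=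
      prod_mono (Ioo_subset_Ioo_left hb₁) subset_rfl
    have hae' : ∀ᵐ p ∂(volume.restrict (Ioo b₁ ν ×ˢ Ioo 0 T : Set (ℝ × ℝ))),
        l p.1 p.2 = Real.exp (∫ r in (0:ℝ)..p.1, μf r) * ψ (p.2 - p.1) :=
      ae_restrict_of_ae_restrict_of_subset hsubset hae
    have hmem' : ∀ᵐ p ∂(volume.restrict (Ioo b₁ ν ×ˢ Ioo 0 T : Set (ℝ × ℝ))),
        p ∈ (Ioo b₁ ν ×ˢ Ioo 0 T : Set (ℝ × ℝ)) :=
      ae_restrict_mem (measurableSet_Ioo.prod measurableSet_Ioo)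
    have h3 : (∫⁻ p in Ioo b₁ ν ×ˢ Ioo 0 T,
          ENNReal.ofReal ((E' p.1 * ψ (p.2 - p.1)) ^ 2)) =
        ∫⁻ p in Ioo b₁ ν ×ˢ Ioo 0 T, ENNReal.ofReal ((l p.1 p.2) ^ 2) := by
      refine lintegral_congr_ae ?_
      filter_upwards [hae', hmem'] with p hp1 hp2
      obtain ⟨⟨hp1a, hp2a⟩, _⟩ := hp2
      have h0 : (0:ℝ) ≤ p.1 := le_trans hb₁ hp1a.le
      rw [hp1, hEeq p.1 h0 (lt_of_lt_of_le hp2a hνA)]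
    rw [h1, h2, hvol] at *
    exact h3
  -- pass to the double integral in the goal
  have hfinal : (∫⁻ p in Ioo b₁ ν ×ˢ Ioo 0 T, ENNReal.ofReal ((l p.1 p.2) ^ 2)) ≤
      ∫⁻ t in Ioo 0 T, ∫⁻ a in Ioo b₁ b₂, ENNReal.ofReal ((l a t) ^ 2) := by
    have hlm : Measurable fun p : ℝ × ℝ => ENNReal.ofReal ((l p.1 p.2) ^ 2) :=
      (hl.pow_const 2).ennreal_ofReal
    have h1 : (∫⁻ p in Ioo b₁ ν ×ˢ Ioo 0 T, ENNReal.ofReal ((l p.1 p.2) ^ 2)) ≤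
        ∫⁻ p in Ioo b₁ b₂ ×ˢ Ioo 0 T, ENNReal.ofReal ((l p.1 p.2) ^ 2) :=
      lintegral_mono_set (prod_mono (Ioo_subset_Ioo_right hνb₂) subset_rfl)
    have h2 : (∫⁻ p in Ioo b₁ b₂ ×ˢ Ioo 0 T, ENNReal.ofReal ((l p.1 p.2) ^ 2)) =
        ∫⁻ t in Ioo 0 T, ∫⁻ a in Ioo b₁ b₂, ENNReal.ofReal ((l a t) ^ 2) := by
      rw [Measure.volume_eq_prod, ← Measure.prod_restrict]
      exact lintegral_prod_symm _ hlm.aemeasurable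
    exact h1.trans_eq h2
  -- assemble the key inequality
  have hkey : ENNReal.ofReal δ * (∫⁻ u in Ioo (-a₀) 0, G u) ≤
      ∫⁻ t in Ioo 0 T, ∫⁻ a in Ioo b₁ b₂, ENNReal.ofReal ((l a t) ^ 2) := by
    calc ENNReal.ofReal δ * (∫⁻ u in Ioo (-a₀) 0, G u)
        = ∫⁻ u in Ioo (-a₀) 0, ENNReal.ofReal δ * G u :=
          (lintegral_const_mul' _ _ ENNReal.ofReal_ne_top).symm
      _ ≤ ∫⁻ u in Ioo (-a₀) 0, ∫⁻ a, K (a, u) := by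
          refine setLIntegral_mono' measurableSet_Ioo ?_
          intro u hu
          exact hstepi u hu
      _ ≤ ∫⁻ u, ∫⁻ a, K (a, u) := setLIntegral_le_lintegral _ _
      _ = ∫⁻ a, ∫⁻ t, Q (a, t) := htonelli
      _ = ∫⁻ p in Ioo b₁ ν ×ˢ Ioo 0 T, ENNReal.ofReal ((l p.1 p.2) ^ 2) := hstrip
      _ ≤ ∫⁻ t in Ioo 0 T, ∫⁻ a in Ioo b₁ b₂, ENNReal.ofReal ((l a t) ^ 2) := hfinal
  -- conclude
  rw [hLHS, ← hrefl]
  have hδne : ENNReal.ofReal δ ≠ 0 := by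
    simp only [ne_eq, ENNReal.ofReal_eq_zero, not_le]
    exact hδpos
  calc (∫⁻ u in Ioo (-a₀) 0, G u)
      = (ENNReal.ofReal δ)⁻¹ * (ENNReal.ofReal δ * ∫⁻ u in Ioo (-a₀) 0, G u) := by
        rw [← mul_assoc, ENNReal.inv_mul_cancel hδne ENNReal.ofReal_ne_top, one_mul]
    _ ≤ (ENNReal.ofReal δ)⁻¹ *
        ∫⁻ t in Ioo 0 T, ∫⁻ a in Ioo b₁ b₂, ENNReal.ofReal ((l a t) ^ 2) :=
        mul_le_mul_right hkey _
    _ = ENNReal.ofReal (1/δ) *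
        ∫⁻ t in Ioo 0 T, ∫⁻ a in Ioo b₁ b₂, ENNReal.ofReal ((l a t) ^ 2) := by
        rw [one_div, ENNReal.ofReal_inv_of_pos hδpos]
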